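/- arXiv:2303.08754 — 4 statements merged into one kernel-verified Lean document; each statement's English description precedes it below -/
import Mathlib

section
/- Let Q be the trapezoid with lattice points C = {(0,0),(1,0),(2,0),(0,1),(1,1)}. The rational functions β̃_{(0,0)} = (1-y)(2-x-y)²/(2-y)², β̃_{(1,0)} = 2x(1-y)(2-x-y)/(2-y)², β̃_{(2,0)} = x²(1-y)/(2-y)², β̃_{(0,1)} = y(2-x-y)/(2-y), β̃_{(1,1)} = xy/(2-y) satisfy: (i) Σ_{c∈C} β̃_c = 1 as rational functions; (ii) linear precision: Σ_{c∈C} β̃_c(x,y)·c = (x,y) wherever defined; (iii) β̃_c(x,y) ≥ 0 for every (x,y) in the interior of Q. -/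
/-- Blending functions with rational linear precision for the trapezoid
`Q = conv{(0,0),(2,0),(0,1),(1,1)}`: sum to one, linear precision (away from `y = 2`),
and nonnegativity on the interior of `Q`. -/
theorem trapezoid_blending_functions (x y : ℝ) :
    (y ≠ 2 →
      ((1 - y) * (2 - x - y) ^ 2 / (2 - y) ^ 2 + 2 * x * (1 - y) * (2 - x - y) / (2 - y) ^ 2 +
        x ^ 2 * (1 - y) / (2 - y) ^ 2 + y * (2 - x - y) / (2 - y) + x * y / (2 - y) = 1) ∧
      (((1 - y) * (2 - x - y) ^ 2 / (2 - y) ^ 2) • ((0 : ℝ), (0 : ℝ)) +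
        (2 * x * (1 - y) * (2 - x - y) / (2 - y) ^ 2) • ((1 : ℝ), (0 : ℝ)) +
        (x ^ 2 * (1 - y) / (2 - y) ^ 2) • ((2 : ℝ), (0 : ℝ)) +
        (y * (2 - x - y) / (2 - y)) • ((0 : ℝ), (1 : ℝ)) +
        (x * y / (2 - y)) • ((1 : ℝ), (1 : ℝ)) = (x, y))) ∧
    (0 < x → 0 < y → y < 1 → x + y < 2 →
      0 ≤ (1 - y) * (2 - x - y) ^ 2 / (2 - y) ^ 2 ∧
      0 ≤ 2 * x * (1 - y) * (2 - x - y) / (2 - y) ^ 2 ∧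
      0 ≤ x ^ 2 * (1 - y) / (2 - y) ^ 2 ∧
      0 ≤ y * (2 - x - y) / (2 - y) ∧
      0 ≤ x * y / (2 - y)) := by
  constructor
  · intro hy
    have h2 : (2 : ℝ) - y ≠ 0 := by intro h; apply hy; linarith
    constructor
    · field_simp
      ring
    · simp only [Prod.smul_mk, smul_eq_mul, Prod.mk_add_mk, Prod.mk.injEq]
      constructor <;> field_simp <;> ring
  · intro hx hy hy1 hxy
    have h1 : (0:ℝ) < 2 - y := by linarith
    have h2 : (0:ℝ) < 1 - y := by linarith
    have h3 : (0:ℝ) < 2 - x - y := by linarith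
    refine ⟨?_, ?_, ?_, ?_, ?_⟩ <;> positivity
end

section
/- With notation as follows: β^i_j : ℝ^{d₁} → ℝ and points b^i_j ∈ ℝ^{d₁} satisfying Σ_{i,j} β^i_j(p)·b^i_j = p, and γ^i_k : ℝ^{d₂} → ℝ and points c^i_k ∈ ℝ^{d₂} satisfying Σ_{i,k} γ^i_k(q)·c^i_k = q; suppose for each i and all (p,q) in a set S, Σ_j β^i_j(p) = Σ_k γ^i_k(q) =: N^i(p,q) ≠ 0. Define β^i_{j,k}(p,q) = β^i_j(p)γ^i_k(q)/N^i(p,q) and m^i_{j,k} = (b^i_j, c^i_k) ∈ ℝ^{d₁}×ℝ^{d₂}. Then linear precision holds: Σ_{i,j,k} β^i_{j,k}(p,q)·m^i_{j,k} = (p,q) for all (p,q) ∈ S. -/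
/-- Linear precision for the blending functions of a toric fiber product: if the two
families of blending functions satisfy linear precision over their point configurations and
the partial sums over the common grading index agree and are nonzero on `S`, then the
products `β i j (p) * γ i k (q) / N i (p, q)` satisfy linear precision over the
concatenated points `(b i j, c i k)`. -/
theorem tfp_blending_linear_precision (r d₁ d₂ : ℕ) (s t : Fin r → ℕ)
    (β : (i : Fin r) → Fin (s i) → (Fin d₁ → ℝ) → ℝ)
    (b : (i : Fin r) → Fin (s i) → (Fin d₁ → ℝ))
    (γ : (i : Fin r) → Fin (t i) → (Fin d₂ → ℝ) → ℝ)
    (c : (i : Fin r) → Fin (t i) → (Fin d₂ → ℝ))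
    (hβ : ∀ p, ∑ i, ∑ j, β i j p • b i j = p)
    (hγ : ∀ q, ∑ i, ∑ k, γ i k q • c i k = q)
    (S : Set ((Fin d₁ → ℝ) × (Fin d₂ → ℝ)))
    (N : Fin r → ((Fin d₁ → ℝ) × (Fin d₂ → ℝ)) → ℝ)
    (hNβ : ∀ i, ∀ pq ∈ S, ∑ j, β i j pq.1 = N i pq)
    (hNγ : ∀ i, ∀ pq ∈ S, ∑ k, γ i k pq.2 = N i pq)
    (hN : ∀ i, ∀ pq ∈ S, N i pq ≠ 0) :
    ∀ pq ∈ S,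
      ∑ i, ∑ j, ∑ k, (β i j pq.1 * γ i k pq.2 / N i pq) • ((b i j, c i k) :
        (Fin d₁ → ℝ) × (Fin d₂ → ℝ)) = pq := by

  intro pq hpq
  refine Prod.ext ?_ ?_
  · simp only [Prod.fst_sum, Prod.smul_fst]
    have : ∀ i j, ∑ k, (β i j pq.1 * γ i k pq.2 / N i pq) • b i j
        = β i j pq.1 • b i j := by
      intro i j
      rw [← Finset.sum_smul]
      congr 1
      rw [← Finset.sum_div, ← Finset.mul_sum, hNγ i pq hpq, mul_div_assoc,
        div_self (hN i pq hpq), mul_one]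
    simp only [this]
    exact hβ pq.1
  · simp only [Prod.snd_sum, Prod.smul_snd]
    have : ∀ i, ∑ j, ∑ k, (β i j pq.1 * γ i k pq.2 / N i pq) • c i k
        = ∑ k, γ i k pq.2 • c i k := by
      intro i
      rw [Finset.sum_comm]
      refine Finset.sum_congr rfl fun k _ => ?_
      rw [← Finset.sum_smul]
      congr 1
      rw [← Finset.sum_div, ← Finset.sum_mul, hNβ i pq hpq, mul_comm,
        mul_div_assoc, div_self (hN i pq hpq), mul_one]
    simp only [this]
    exact hγ pq.2
end

section
/- For the independence model of two binary random variables: given u ∈ ℝ^{2×2} with all entries positive, the point p̂ with p̂_{jk} = (u_{j\,+}·u_{+\,k})/(u_{++})² is the unique maximizer over the set {p ∈ (0,1)^{2×2} : Σp_{jk}=1, p_{00}p_{11}=p_{01}p_{10}} of the log-likelihood ℓ(p) = Σ_{j,k} u_{jk} log p_{jk}. -/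
lemma gibbs_aux (w x s : ℝ) (hw : 0 < w) (hx : 0 < x) (hs : 0 < s) :
    w * Real.log x ≤ w * Real.log (w / s) + (x * s - w) := by
  have hlog : Real.log x = Real.log (w / s) + Real.log (x * s / w) := by
    rw [← Real.log_mul (by positivity) (by positivity)]
    congr 1
    field_simp
  have h2 : Real.log (x * s / w) ≤ x * s / w - 1 :=
    Real.log_le_sub_one_of_pos (by positivity)
  have h3 : w * (x * s / w - 1) = x * s - w := by field_simp
  have h4 : w * Real.log (x * s / w) ≤ x * s - w := by
    calc w * Real.log (x * s / w) ≤ w * (x * s / w - 1) :=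
          mul_le_mul_of_nonneg_left h2 hw.le
      _ = x * s - w := h3
  calc w * Real.log x = w * Real.log (w / s) + w * Real.log (x * s / w) := by
        rw [hlog]; ring
    _ ≤ w * Real.log (w / s) + (x * s - w) := by linarith

lemma gibbs_aux_lt (w x s : ℝ) (hw : 0 < w) (hx : 0 < x) (hs : 0 < s)
    (hne : x ≠ w / s) :
    w * Real.log x < w * Real.log (w / s) + (x * s - w) := by
  have hlog : Real.log x = Real.log (w / s) + Real.log (x * s / w) := by
    rw [← Real.log_mul (by positivity) (by positivity)]
    congr 1
    field_simp
  have hne1 : x * s / w ≠ 1 := by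
    intro h
    apply hne
    rw [div_eq_one_iff_eq (by positivity)] at h
    rw [eq_div_iff hs.ne']
    exact h
  have h2 : Real.log (x * s / w) < x * s / w - 1 :=
    Real.log_lt_sub_one_of_pos (by positivity) hne1
  have h3 : w * (x * s / w - 1) = x * s - w := by field_simp
  have h4 : w * Real.log (x * s / w) < x * s - w := by
    calc w * Real.log (x * s / w) < w * (x * s / w - 1) :=
          (mul_lt_mul_iff_right₀ hw).mpr h2
      _ = x * s - w := h3
  calc w * Real.log x = w * Real.log (w / s) + w * Real.log (x * s / w) := by
        rw [hlog]; ring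
    _ < w * Real.log (w / s) + (x * s - w) := by linarith

lemma gibbs_le (w0 w1 x y s : ℝ) (hw0 : 0 < w0) (hw1 : 0 < w1) (hx : 0 < x) (hy : 0 < y)
    (hxy : x + y = 1) (hs : w0 + w1 = s) :
    w0 * Real.log x + w1 * Real.log y ≤ w0 * Real.log (w0 / s) + w1 * Real.log (w1 / s) := by
  have hspos : 0 < s := by linarith
  have h1 := gibbs_aux w0 x s hw0 hx hspos
  have h2 := gibbs_aux w1 y s hw1 hy hspos
  have h3 : x * s + y * s = s := by rw [← add_mul, hxy, one_mul]
  linarith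

lemma gibbs_lt (w0 w1 x y s : ℝ) (hw0 : 0 < w0) (hw1 : 0 < w1) (hx : 0 < x) (hy : 0 < y)
    (hxy : x + y = 1) (hs : w0 + w1 = s) (hne : x ≠ w0 / s) :
    w0 * Real.log x + w1 * Real.log y < w0 * Real.log (w0 / s) + w1 * Real.log (w1 / s) := by
  have hspos : 0 < s := by linarith
  have h1 := gibbs_aux_lt w0 x s hw0 hx hspos hne
  have h2 := gibbs_aux w1 y s hw1 hy hspos
  have h3 : x * s + y * s = s := by rw [← add_mul, hxy, one_mul]
  linarith

/-- MLE of the independence model of two binary random variables: the matrix of products of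
marginal frequencies is the unique maximizer of the log-likelihood over the independence
model inside the open probability simplex. -/
theorem independence_model_mle (u : Fin 2 → Fin 2 → ℝ) (hu : ∀ j k, 0 < u j k) :
    let M : Set (Fin 2 → Fin 2 → ℝ) :=
      {p | (∀ j k, 0 < p j k ∧ p j k < 1) ∧ (∑ j, ∑ k, p j k = 1) ∧
        p 0 0 * p 1 1 = p 0 1 * p 1 0}
    let L : (Fin 2 → Fin 2 → ℝ) → ℝ := fun p => ∑ j, ∑ k, u j k * Real.log (p j k)
    let phat : Fin 2 → Fin 2 → ℝ :=
      fun j k => (∑ k', u j k') * (∑ j', u j' k) / (∑ j', ∑ k', u j' k') ^ 2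
    phat ∈ M ∧ ∀ p ∈ M, p ≠ phat → L p < L phat := by
  intro M L phat
  have h00 := hu 0 0; have h01 := hu 0 1; have h10 := hu 1 0; have h11 := hu 1 1
  set s : ℝ := u 0 0 + u 0 1 + (u 1 0 + u 1 1) with hsdef
  have hs : 0 < s := by positivity
  have hU0 : 0 < u 0 0 + u 0 1 := by positivity
  have hU1 : 0 < u 1 0 + u 1 1 := by positivity
  have hV0 : 0 < u 0 0 + u 1 0 := by positivity
  have hV1 : 0 < u 0 1 + u 1 1 := by positivity
  have hphat : ∀ j k, phat j k = (u j 0 + u j 1) * (u 0 k + u 1 k) / s ^ 2 := by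
    intro j k
    simp only [phat, Fin.sum_univ_two, hsdef]
  have hphat00 : phat 0 0 = ((u 0 0 + u 0 1) / s) * ((u 0 0 + u 1 0) / s) := by
    rw [hphat]; field_simp
  have hphat01 : phat 0 1 = ((u 0 0 + u 0 1) / s) * ((u 0 1 + u 1 1) / s) := by
    rw [hphat]; field_simp
  have hphat10 : phat 1 0 = ((u 1 0 + u 1 1) / s) * ((u 0 0 + u 1 0) / s) := by
    rw [hphat]; field_simp
  have hphat11 : phat 1 1 = ((u 1 0 + u 1 1) / s) * ((u 0 1 + u 1 1) / s) := by
    rw [hphat]; field_simp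
  have hmemphat : phat ∈ M := by
    refine ⟨?_, ?_, ?_⟩
    · intro j k
      rw [hphat]
      constructor
      · have : 0 < u j 0 + u j 1 := by fin_cases j <;> positivity
        have : 0 < u 0 k + u 1 k := by fin_cases k <;> positivity
        positivity
      · rw [div_lt_one (by positivity)]
        have h1 : u j 0 + u j 1 < s := by fin_cases j <;> (simp; nlinarith)
        have h2 : u 0 k + u 1 k < s := by fin_cases k <;> (simp; nlinarith)
        have h3 : 0 < u j 0 + u j 1 := by fin_cases j <;> positivity
        nlinarith
    · simp only [Fin.sum_univ_two, hphat]
      field_simp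
      ring
    · rw [hphat 0 0, hphat 1 1, hphat 0 1, hphat 1 0]
      field_simp
  refine ⟨hmemphat, ?_⟩
  intro p hp hne
  obtain ⟨hpos, hsum, hind⟩ := hp
  simp only [Fin.sum_univ_two] at hsum
  have hp00 := (hpos 0 0).1
  have hp01 := (hpos 0 1).1
  have hp10 := (hpos 1 0).1
  have hp11 := (hpos 1 1).1
  set a0 : ℝ := p 0 0 + p 0 1 with ha0def
  set a1 : ℝ := p 1 0 + p 1 1 with ha1def
  set b0 : ℝ := p 0 0 + p 1 0 with hb0def
  set b1 : ℝ := p 0 1 + p 1 1 with hb1def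
  have ha0 : 0 < a0 := by positivity
  have ha1 : 0 < a1 := by positivity
  have hb0 : 0 < b0 := by positivity
  have hb1 : 0 < b1 := by positivity
  have hab : a0 + a1 = 1 := by rw [ha0def, ha1def]; linarith
  have hb : b0 + b1 = 1 := by rw [hb0def, hb1def]; linarith
  have hf00 : p 0 0 = a0 * b0 := by
    rw [ha0def, hb0def]; linear_combination hind - p 0 0 * hsum
  have hf01 : p 0 1 = a0 * b1 := by
    rw [ha0def, hb1def]; linear_combination - hind - p 0 1 * hsum
  have hf10 : p 1 0 = a1 * b0 := by
    rw [ha1def, hb0def]; linear_combination - hind - p 1 0 * hsum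
  have hf11 : p 1 1 = a1 * b1 := by
    rw [ha1def, hb1def]; linear_combination hind - p 1 1 * hsum
  -- expand L p
  have hLp : L p = ((u 0 0 + u 0 1) * Real.log a0 + (u 1 0 + u 1 1) * Real.log a1)
      + ((u 0 0 + u 1 0) * Real.log b0 + (u 0 1 + u 1 1) * Real.log b1) := by
    simp only [L, Fin.sum_univ_two]
    rw [hf00, hf01, hf10, hf11,
      Real.log_mul ha0.ne' hb0.ne', Real.log_mul ha0.ne' hb1.ne',
      Real.log_mul ha1.ne' hb0.ne', Real.log_mul ha1.ne' hb1.ne']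
    ring
  have hLphat : L phat = ((u 0 0 + u 0 1) * Real.log ((u 0 0 + u 0 1) / s)
        + (u 1 0 + u 1 1) * Real.log ((u 1 0 + u 1 1) / s))
      + ((u 0 0 + u 1 0) * Real.log ((u 0 0 + u 1 0) / s)
        + (u 0 1 + u 1 1) * Real.log ((u 0 1 + u 1 1) / s)) := by
    simp only [L, Fin.sum_univ_two]
    rw [hphat00, hphat01, hphat10, hphat11,
      Real.log_mul (by positivity) (by positivity),
      Real.log_mul (by positivity) (by positivity),
      Real.log_mul (by positivity) (by positivity),
      Real.log_mul (by positivity) (by positivity)]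
    ring
  have hsa : (u 0 0 + u 0 1) + (u 1 0 + u 1 1) = s := by rw [hsdef]
  have hsb : (u 0 0 + u 1 0) + (u 0 1 + u 1 1) = s := by rw [hsdef]; ring
  -- key: p ≠ phat forces one marginal to differ
  have hcases : a0 ≠ (u 0 0 + u 0 1) / s ∨ b0 ≠ (u 0 0 + u 1 0) / s := by
    by_contra h
    push_neg at h
    obtain ⟨hA, hB⟩ := h
    apply hne
    have hA1 : a1 = (u 1 0 + u 1 1) / s := by
      have h : (u 0 0 + u 0 1) / s + (u 1 0 + u 1 1) / s = 1 := by
        rw [← add_div, hsa, div_self hs.ne']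
      linarith [hab, hA, h]
    have hB1 : b1 = (u 0 1 + u 1 1) / s := by
      have h : (u 0 0 + u 1 0) / s + (u 0 1 + u 1 1) / s = 1 := by
        rw [← add_div, hsb, div_self hs.ne']
      linarith [hb, hB, h]
    funext j k
    fin_cases j <;> fin_cases k
    · show p 0 0 = phat 0 0
      rw [hf00, hphat00, hA, hB]
    · show p 0 1 = phat 0 1
      rw [hf01, hphat01, hA, hB1]
    · show p 1 0 = phat 1 0
      rw [hf10, hphat10, hA1, hB]
    · show p 1 1 = phat 1 1
      rw [hf11, hphat11, hA1, hB1]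
  rw [hLp, hLphat]
  rcases hcases with hA | hB
  · have h1 := gibbs_lt (u 0 0 + u 0 1) (u 1 0 + u 1 1) a0 a1 s hU0 hU1 ha0 ha1 hab hsa hA
    have h2 := gibbs_le (u 0 0 + u 1 0) (u 0 1 + u 1 1) b0 b1 s hV0 hV1 hb0 hb1 hb hsb
    linarith
  · have h1 := gibbs_le (u 0 0 + u 0 1) (u 1 0 + u 1 1) a0 a1 s hU0 hU1 ha0 ha1 hab hsa
    have h2 := gibbs_lt (u 0 0 + u 1 0) (u 0 1 + u 1 1) b0 b1 s hV0 hV1 hb0 hb1 hb hsb hB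
    linarith
end

section
/- Let u = (u^i_{j,k})_{i∈[r], j∈[s_i], k∈[t_i]} be positive reals, and write u^i_{j,+} = Σ_k u^i_{j,k}, u^i_{+,k} = Σ_j u^i_{j,k}, u^i_{+,+} = Σ_{j,k} u^i_{j,k}, u^+_{+,+} = Σ_i u^i_{+,+}. Suppose H_B with coefficient vector λ_B and H_C with coefficient vector λ_C are matrices/vectors such that the Horn parametrizations applied to the marginal data vectors give values p̂^i_j := λ^i_j Π_α ((H_B u_B)_α)^{(H_B)_{α,(i,j)}} and q̂^i_k := λ^i_k Π_α ((H_C u_C)_α)^{(H_C)_{α,(i,k)}}, where u_B = (u^i_{j,+}) and u_C = (u^i_{+,k}). Let H be the concatenated Horn matrix of the toric fiber product (columns: stack of the (i,j)-column of H_B, the (i,k)-column of H_C, and minus the i-th column of the simplex Horn matrix H_A) with coefficients λ^i_{j,k} = −λ^i_j λ^i_k. Then, assuming all factors appearing are nonzero, the (i,j,k)-coordinate of the Horn parametrization φ_{(H,λ)}(u) equals p̂^i_j · q̂^i_k · (u^+_{+,+}/u^i_{+,+}). -/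
/-- The Horn parametrization of the toric fiber product: each coordinate of the Horn
parametrization built from the concatenated Horn matrix (with coefficients
`λ^i_{j,k} = -λ^i_j λ^i_k`) equals `p̂ⁱⱼ · q̂ⁱₖ · (u⁺₊₊ / uⁱ₊₊)`, where `p̂, q̂` are the Horn
parametrizations of the factors evaluated at the marginal data vectors. -/
theorem tfp_horn_parametrization (r r₁ r₂ : ℕ) (s t : Fin r → ℕ)
    (HB : Matrix (Fin r₁) ((i : Fin r) × Fin (s i)) ℤ)
    (HC : Matrix (Fin r₂) ((i : Fin r) × Fin (t i)) ℤ)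
    (lamB : ((i : Fin r) × Fin (s i)) → ℝ) (lamC : ((i : Fin r) × Fin (t i)) → ℝ)
    (u : (i : Fin r) → Fin (s i) → Fin (t i) → ℝ) (hu : ∀ i j k, 0 < u i j k)
    (uB : ((i : Fin r) × Fin (s i)) → ℝ) (huB : ∀ c, uB c = ∑ k, u c.1 c.2 k)
    (uC : ((i : Fin r) × Fin (t i)) → ℝ) (huC : ∀ c, uC c = ∑ j, u c.1 j c.2)
    (hBnz : ∀ α, (∑ c, (HB α c : ℝ) * uB c) ≠ 0)
    (hCnz : ∀ α, (∑ c, (HC α c : ℝ) * uC c) ≠ 0) :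
    let HA : Matrix (Fin (r + 1)) (Fin r) ℤ :=
      fun α i => if (α : ℕ) = (i : ℕ) then 1 else if (α : ℕ) = r then -1 else 0
    let H : Matrix (Fin r₁ ⊕ (Fin r₂ ⊕ Fin (r + 1)))
        ((i : Fin r) × (Fin (s i) × Fin (t i))) ℤ :=
      fun α c =>
        Sum.elim (fun a => HB a ⟨c.1, c.2.1⟩)
          (Sum.elim (fun a => HC a ⟨c.1, c.2.2⟩) (fun a => -(HA a c.1))) α
    let lam : ((i : Fin r) × (Fin (s i) × Fin (t i))) → ℝ :=
      fun c => -(lamB ⟨c.1, c.2.1⟩ * lamC ⟨c.1, c.2.2⟩)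
    let Hu : (Fin r₁ ⊕ (Fin r₂ ⊕ Fin (r + 1))) → ℝ :=
      fun α => ∑ c : (i : Fin r) × (Fin (s i) × Fin (t i)),
        (H α c : ℝ) * u c.1 c.2.1 c.2.2
    let phat : (i : Fin r) → Fin (s i) → ℝ :=
      fun i j => lamB ⟨i, j⟩ * ∏ α, (∑ c, (HB α c : ℝ) * uB c) ^ (HB α ⟨i, j⟩)
    let qhat : (i : Fin r) → Fin (t i) → ℝ :=
      fun i k => lamC ⟨i, k⟩ * ∏ α, (∑ c, (HC α c : ℝ) * uC c) ^ (HC α ⟨i, k⟩)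
    ∀ (i : Fin r) (j : Fin (s i)) (k : Fin (t i)),
      lam ⟨i, j, k⟩ * ∏ α, (Hu α) ^ (H α ⟨i, j, k⟩) =
        phat i j * qhat i k *
          ((∑ i', ∑ j', ∑ k', u i' j' k') / (∑ j', ∑ k', u i j' k')) := by

  intro HA H lam Hu phat qhat i j k
  have hsum : ∀ (f : (i : Fin r) → Fin (s i) → Fin (t i) → ℝ),
      (∑ c : (i : Fin r) × (Fin (s i) × Fin (t i)), f c.1 c.2.1 c.2.2)
        = ∑ i', ∑ j', ∑ k', f i' j' k' := by
    intro f
    rw [← Finset.univ_sigma_univ, Finset.sum_sigma]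
    exact Finset.sum_congr rfl fun i' _ => Fintype.sum_prod_type (f := fun p => f i' p.1 p.2)
  set S := ∑ j', ∑ k', u i j' k' with hS
  set T := ∑ i', ∑ j', ∑ k', u i' j' k' with hT
  have hSpos : 0 < S :=
    Finset.sum_pos (fun j' _ => Finset.sum_pos (fun k' _ => hu i j' k')
      ⟨k, Finset.mem_univ k⟩) ⟨j, Finset.mem_univ j⟩
  have hB : ∀ a, Hu (Sum.inl a) = ∑ c, (HB a c : ℝ) * uB c := by
    intro a
    have h1 : Hu (Sum.inl a) = ∑ i', ∑ j', ∑ k', ((HB a ⟨i', j'⟩ : ℤ) : ℝ) * u i' j' k' :=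
      hsum fun i' j' k' => ((HB a ⟨i', j'⟩ : ℤ) : ℝ) * u i' j' k'
    rw [h1, ← Finset.univ_sigma_univ, Finset.sum_sigma]
    refine Finset.sum_congr rfl fun i' _ => Finset.sum_congr rfl fun j' _ => ?_
    rw [huB, Finset.mul_sum]
  have hC : ∀ a, Hu (Sum.inr (Sum.inl a)) = ∑ c, (HC a c : ℝ) * uC c := by
    intro a
    have h1 : Hu (Sum.inr (Sum.inl a))
        = ∑ i', ∑ j', ∑ k', ((HC a ⟨i', k'⟩ : ℤ) : ℝ) * u i' j' k' :=
      hsum fun i' j' k' => ((HC a ⟨i', k'⟩ : ℤ) : ℝ) * u i' j' k'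
    rw [h1, ← Finset.univ_sigma_univ, Finset.sum_sigma]
    refine Finset.sum_congr rfl fun i' _ => ?_
    rw [Finset.sum_comm]
    refine Finset.sum_congr rfl fun k' _ => ?_
    rw [huC, Finset.mul_sum]
  have hlast : Hu (Sum.inr (Sum.inr (Fin.last r))) = T := by
    have h1 : Hu (Sum.inr (Sum.inr (Fin.last r)))
        = ∑ i', ∑ j', ∑ k', ((-(HA (Fin.last r) i') : ℤ) : ℝ) * u i' j' k' :=
      hsum fun i' j' k' => ((-(HA (Fin.last r) i') : ℤ) : ℝ) * u i' j' k'
    rw [h1, hT]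
    refine Finset.sum_congr rfl fun i' _ => ?_
    have hA : HA (Fin.last r) i' = -1 := by
      show (if ((Fin.last r : Fin (r+1)) : ℕ) = (i' : ℕ) then 1
        else if ((Fin.last r : Fin (r+1)) : ℕ) = r then (-1 : ℤ) else 0) = -1
      simp only [Fin.val_last]
      rw [if_neg (Nat.ne_of_gt i'.isLt)]
      simp
    rw [hA]
    simp
  have hcast : ∀ b : Fin r, Hu (Sum.inr (Sum.inr b.castSucc)) = -(∑ j', ∑ k', u b j' k') := by
    intro b
    have h1 : Hu (Sum.inr (Sum.inr b.castSucc))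
        = ∑ i', ∑ j', ∑ k', ((-(HA b.castSucc i') : ℤ) : ℝ) * u i' j' k' :=
      hsum fun i' j' k' => ((-(HA b.castSucc i') : ℤ) : ℝ) * u i' j' k'
    rw [h1]
    have hA : ∀ i', HA b.castSucc i' = if b = i' then 1 else 0 := by
      intro i'
      show (if ((b.castSucc : Fin (r+1)) : ℕ) = (i' : ℕ) then 1
        else if ((b.castSucc : Fin (r+1)) : ℕ) = r then (-1 : ℤ) else 0)
        = if b = i' then 1 else 0
      simp only [Fin.coe_castSucc]
      by_cases h : b = i'
      · rw [if_pos (by rw [h]), if_pos h]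
      · rw [if_neg (fun hh => h (Fin.ext hh)), if_neg (Nat.ne_of_lt b.isLt), if_neg h]
    calc ∑ i', ∑ j', ∑ k', ((-(HA b.castSucc i') : ℤ) : ℝ) * u i' j' k'
        = ∑ i', if b = i' then -(∑ j', ∑ k', u i' j' k') else 0 := by
          refine Finset.sum_congr rfl fun i' _ => ?_
          rw [hA]
          by_cases h : b = i' <;> simp [h]
      _ = -(∑ j', ∑ k', u b j' k') := by rw [Finset.sum_ite_eq]; simp
  simp only [Fintype.prod_sum_type]
  have e1 : H (Sum.inr (Sum.inr (Fin.last r))) ⟨i, j, k⟩ = 1 := by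
    show -(if ((Fin.last r : Fin (r+1)) : ℕ) = (i : ℕ) then 1
      else if ((Fin.last r : Fin (r+1)) : ℕ) = r then (-1 : ℤ) else 0) = 1
    simp only [Fin.val_last]
    rw [if_neg (Nat.ne_of_gt i.isLt)]
    simp
  have e2 : ∀ b : Fin r, H (Sum.inr (Sum.inr b.castSucc)) ⟨i, j, k⟩
      = if b = i then -1 else 0 := by
    intro b
    show -(if ((b.castSucc : Fin (r+1)) : ℕ) = (i : ℕ) then 1
      else if ((b.castSucc : Fin (r+1)) : ℕ) = r then (-1 : ℤ) else 0)
      = if b = i then -1 else 0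
    simp only [Fin.coe_castSucc]
    by_cases h : b = i
    · rw [if_pos (by rw [h]), if_pos h]
    · rw [if_neg (fun hh => h (Fin.ext hh)), if_neg (Nat.ne_of_lt b.isLt), if_neg h]
      norm_num
  have hPB : (∏ a : Fin r₁, Hu (Sum.inl a) ^ H (Sum.inl a) ⟨i, j, k⟩)
      = ∏ α, (∑ c, (HB α c : ℝ) * uB c) ^ (HB α ⟨i, j⟩) :=
    Finset.prod_congr rfl fun a _ => by rw [hB a]; rfl
  have hPC : (∏ a : Fin r₂, Hu (Sum.inr (Sum.inl a)) ^ H (Sum.inr (Sum.inl a)) ⟨i, j, k⟩)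
      = ∏ α, (∑ c, (HC α c : ℝ) * uC c) ^ (HC α ⟨i, k⟩) :=
    Finset.prod_congr rfl fun a _ => by rw [hC a]; rfl
  have hPA : (∏ a : Fin (r + 1),
      Hu (Sum.inr (Sum.inr a)) ^ H (Sum.inr (Sum.inr a)) ⟨i, j, k⟩) = -(T / S) := by
    rw [Fin.prod_univ_castSucc]
    have hmid : (∏ b : Fin r,
        Hu (Sum.inr (Sum.inr b.castSucc)) ^ H (Sum.inr (Sum.inr b.castSucc)) ⟨i, j, k⟩)
        = (-S)⁻¹ := by
      rw [Finset.prod_eq_single i]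
      · rw [e2 i, if_pos rfl, hcast i, zpow_neg_one, ← hS]
      · intro b _ hb
        rw [e2 b, if_neg hb, zpow_zero]
      · intro h; exact absurd (Finset.mem_univ i) h
    rw [hmid, e1, hlast, zpow_one, inv_neg, neg_mul, neg_inj, inv_mul_eq_div]
  rw [hPB, hPC, hPA]
  show -(lamB ⟨i, j⟩ * lamC ⟨i, k⟩) *
      ((∏ α, (∑ c, (HB α c : ℝ) * uB c) ^ (HB α ⟨i, j⟩)) *
        ((∏ α, (∑ c, (HC α c : ℝ) * uC c) ^ (HC α ⟨i, k⟩)) * -(T / S)))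
      = (lamB ⟨i, j⟩ * ∏ α, (∑ c, (HB α c : ℝ) * uB c) ^ (HB α ⟨i, j⟩)) *
        (lamC ⟨i, k⟩ * ∏ α, (∑ c, (HC α c : ℝ) * uC c) ^ (HC α ⟨i, k⟩)) * (T / S)
  ring
end
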